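/- (Classification calibration of exponential loss with asymmetric weights) For c₁, c₋₁ > 0 define H(α) = c₁ e^{−α} + c₋₁ e^{α}. Then inf_{α∈ℝ} H(α) = 2√(c₁ c₋₁), and if c₁ > c₋₁ then inf_{α ≤ 0} H(α) = c₁ + c₋₁ > 2√(c₁c₋₁); consequently (c₁+c₋₁)·ψ((c₁−c₋₁)/(c₁+c₋₁)) = c₁ + c₋₁ − 2√(c₁c₋₁) with ψ(θ) = 1 − √(1−θ²). -/
import Mathlib


/-- Classification calibration of exponential loss with asymmetric
weights: for `c₁, c₋₁ > 0` and `H(α) = c₁e^{−α} + c₋₁e^{α}`, `inf_α H(α) = 2√(c₁c₋₁)`;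
if `c₁ > c₋₁` then `inf_{α ≤ 0} H(α) = c₁ + c₋₁ > 2√(c₁c₋₁)`; and
`(c₁+c₋₁)·ψ((c₁−c₋₁)/(c₁+c₋₁)) = c₁ + c₋₁ − 2√(c₁c₋₁)` for `ψ(θ) = 1 − √(1−θ²)`. -/
theorem exponential_loss_calibration
    (c1 cm1 : ℝ) (hc1 : 0 < c1) (hcm1 : 0 < cm1)
    (H : ℝ → ℝ) (hH : ∀ α, H α = c1 * Real.exp (-α) + cm1 * Real.exp α) :
    IsGLB (Set.range H) (2 * Real.sqrt (c1 * cm1)) ∧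
    (c1 > cm1 →
      IsGLB (H '' Set.Iic 0) (c1 + cm1) ∧ 2 * Real.sqrt (c1 * cm1) < c1 + cm1) ∧
    (c1 + cm1) * (1 - Real.sqrt (1 - ((c1 - cm1) / (c1 + cm1)) ^ 2))
      = c1 + cm1 - 2 * Real.sqrt (c1 * cm1) := by
  have hs1 : Real.sqrt c1 ^ 2 = c1 := Real.sq_sqrt hc1.le
  have hs2 : Real.sqrt cm1 ^ 2 = cm1 := Real.sq_sqrt hcm1.le
  have hsm : Real.sqrt (c1 * cm1) = Real.sqrt c1 * Real.sqrt cm1 :=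
    Real.sqrt_mul hc1.le cm1
  have hlb : ∀ α : ℝ, 2 * Real.sqrt (c1 * cm1) ≤ H α := by
    intro α
    rw [hH]
    have h1 : 0 < Real.exp (-α) := Real.exp_pos _
    have h2 : 0 < Real.exp α := Real.exp_pos _
    have hmul : Real.exp (-α) * Real.exp α = 1 := by
      rw [← Real.exp_add]; simp
    have key : Real.sqrt (c1 * cm1)
        = Real.sqrt (c1 * Real.exp (-α)) * Real.sqrt (cm1 * Real.exp α) := by
      rw [← Real.sqrt_mul (by positivity)]
      congr 1
      linear_combination (-(c1 * cm1)) * hmul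
    have ha : Real.sqrt (c1 * Real.exp (-α)) ^ 2 = c1 * Real.exp (-α) :=
      Real.sq_sqrt (by positivity)
    have hb : Real.sqrt (cm1 * Real.exp α) ^ 2 = cm1 * Real.exp α :=
      Real.sq_sqrt (by positivity)
    nlinarith [sq_nonneg (Real.sqrt (c1 * Real.exp (-α)) - Real.sqrt (cm1 * Real.exp α))]
  refine ⟨?_, ?_, ?_⟩
  · constructor
    · rintro y ⟨α, rfl⟩; exact hlb α
    · intro b hb
      have hmem : 2 * Real.sqrt (c1 * cm1) ∈ Set.range H := by
        refine ⟨Real.log (Real.sqrt c1 / Real.sqrt cm1), ?_⟩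
        rw [hH]
        have h1 : Real.sqrt c1 / Real.sqrt cm1 > 0 := by positivity
        rw [Real.exp_neg, Real.exp_log h1, hsm]
        field_simp
        nlinarith
      exact hb hmem
  · intro hgt
    constructor
    · constructor
      · rintro y ⟨α, hα, rfl⟩
        rw [hH]
        have ht : Real.exp α ≤ 1 := Real.exp_le_one_iff.mpr hα
        have htp : 0 < Real.exp α := Real.exp_pos _
        have hmul : Real.exp (-α) * Real.exp α = 1 := by
          rw [← Real.exp_add]; simp
        have h3 : (0:ℝ) ≤ c1 - cm1 * Real.exp α := by nlinarith
        nlinarith [mul_nonneg (sub_nonneg.2 ht) h3, mul_pos htp htp]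
      · intro b hb
        have : c1 + cm1 ∈ H '' Set.Iic 0 := by
          refine ⟨0, Set.mem_Iic.mpr le_rfl, ?_⟩
          rw [hH]; simp
        exact hb this
    · have hne : Real.sqrt c1 ≠ Real.sqrt cm1 := by
        intro h
        have := congrArg (· ^ 2) h
        simp only [hs1, hs2] at this
        exact absurd this (ne_of_gt hgt)
      rw [hsm]
      nlinarith [sq_pos_of_ne_zero (sub_ne_zero.2 hne), sq_nonneg (Real.sqrt c1 - Real.sqrt cm1)]
  · have hsum : (0:ℝ) < c1 + cm1 := by linarith
    have key : Real.sqrt (1 - ((c1 - cm1) / (c1 + cm1)) ^ 2)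
        = 2 * Real.sqrt (c1 * cm1) / (c1 + cm1) := by
      rw [show 1 - ((c1 - cm1) / (c1 + cm1)) ^ 2
          = (2 * Real.sqrt (c1 * cm1) / (c1 + cm1)) ^ 2 by
        have : Real.sqrt (c1 * cm1) ^ 2 = c1 * cm1 := Real.sq_sqrt (by positivity)
        field_simp
        nlinarith]
      exact Real.sqrt_sq (by positivity)
    rw [key]
    field_simp
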